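/- For 1 ≤ i ≤ n, the diagonal pivots p_{i,i} of the Neville elimination of the Bernstein–Vandermonde matrix satisfy the recurrence: with q_{i,i} = C(n,i-1)/Π_{k=1}^{i-1}(1-x_k), one has q_{1,1} = 1, q_{i+1,i+1} = q_{i,i}·(n-i+1)/(i·(1-x_i)), and p_{i+1,i+1} = q_{i+1,i+1}·(1-x_{i+1})^{n-i}·Π_{k<i+1}(x_{i+1}-x_k). -/

import Mathlib

/-- Closed form of the diagonal pivots p_{i,i} of the Neville elimination of the
Bernstein–Vandermonde matrix. -/
noncomputable def pBV (n : ℕ) (x : ℕ → ℝ) (i : ℕ) : ℝ :=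
  (n.choose (i - 1) : ℝ) * (1 - x i) ^ (n + 1 - i) *
      (∏ k ∈ Finset.Ico 1 i, (x i - x k)) / ∏ k ∈ Finset.Icc 1 (i - 1), (1 - x k)

/-- q_{i,i} = C(n,i-1)/Π_{k=1}^{i-1}(1-x_k). -/
noncomputable def qBV (n : ℕ) (x : ℕ → ℝ) (i : ℕ) : ℝ :=
  (n.choose (i - 1) : ℝ) / ∏ k ∈ Finset.Icc 1 (i - 1), (1 - x k)

/-- Recurrence for the diagonal pivots of the Neville elimination of the
Bernstein–Vandermonde matrix. -/
theorem bernstein_vandermonde_pivot_recurrence (n : ℕ) (x : ℕ → ℝ)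
    (hx : ∀ k, 1 ≤ k → k ≤ n + 1 → 0 < x k ∧ x k < 1)
    (hmono : ∀ k l, 1 ≤ k → k < l → l ≤ n + 1 → x k < x l) :
    qBV n x 1 = 1 ∧
    ∀ i, 1 ≤ i → i ≤ n →
      qBV n x (i + 1) = qBV n x i * ((n : ℝ) - i + 1) / ((i : ℝ) * (1 - x i)) ∧
      pBV n x (i + 1) =
        qBV n x (i + 1) * (1 - x (i + 1)) ^ (n - i) *
          ∏ k ∈ Finset.Icc 1 i, (x (i + 1) - x k) := by
  constructor
  · simp [qBV]
  intro i hi1 hin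
  have hprodne : (∏ k ∈ Finset.Icc 1 (i - 1), (1 - x k)) ≠ 0 := by
    apply Finset.prod_ne_zero_iff.2
    intro k hk
    simp only [Finset.mem_Icc] at hk
    have := (hx k hk.1 (by omega)).2
    linarith
  have hxi : x i < 1 := (hx i hi1 (by omega)).2
  have hxine : (1 : ℝ) - x i ≠ 0 := by linarith
  have hine : (i : ℝ) ≠ 0 := Nat.cast_ne_zero.2 (by omega)
  have hIcc : Finset.Icc 1 i = insert i (Finset.Icc 1 (i - 1)) := by
    ext k; simp [Finset.mem_Icc, Finset.mem_insert]; omega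
  have hnotmem : i ∉ Finset.Icc 1 (i - 1) := by simp; omega
  have hprodsplit : (∏ k ∈ Finset.Icc 1 i, (1 - x k)) =
      (1 - x i) * ∏ k ∈ Finset.Icc 1 (i - 1), (1 - x k) := by
    rw [hIcc, Finset.prod_insert hnotmem]
  have hchoose : (n.choose i : ℝ) * i = (n.choose (i - 1) : ℝ) * ((n : ℝ) - i + 1) := by
    have h := Nat.choose_succ_right_eq n (i - 1)
    have hi' : i - 1 + 1 = i := by omega
    rw [hi'] at h
    have hcast : ((n - (i - 1) : ℕ) : ℝ) = (n : ℝ) - i + 1 := by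
      push_cast [Nat.cast_sub (by omega : i - 1 ≤ n)]
      push_cast [Nat.cast_sub (by omega : 1 ≤ i)]
      ring
    calc (n.choose i : ℝ) * i = ((n.choose i * i : ℕ) : ℝ) := by push_cast; ring
      _ = ((n.choose (i - 1) * (n - (i - 1)) : ℕ) : ℝ) := by rw [h]
      _ = (n.choose (i - 1) : ℝ) * ((n : ℝ) - i + 1) := by push_cast [hcast]; ring
  have hq : qBV n x (i + 1) = qBV n x i * ((n : ℝ) - i + 1) / ((i : ℝ) * (1 - x i)) := by
    simp only [qBV, Nat.add_sub_cancel, hprodsplit]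
    field_simp
    linear_combination hchoose
  refine ⟨hq, ?_⟩
  simp only [pBV, qBV, Nat.add_sub_cancel]
  have h1 : n + 1 - (i + 1) = n - i := by omega
  have h2 : Finset.Ico 1 (i + 1) = Finset.Icc 1 i := by
    ext k; simp [Finset.mem_Ico, Finset.mem_Icc]
  rw [h1, h2]
  ring
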